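/- Fix sets X, Y and a partial function a : Y ⇀ X. Let Reg(PT_XY^a) denote the set of regular elements of the sandwich semigroup PT_XY^a, let Reg(PT(X,B)) denote the set of partial functions g : X ⇀ X with ran(g) ⊆ ran(a) that are regular in the semigroup PT(X,B) = {g : X ⇀ X : ran(g) ⊆ ran(a)} under composition, and let Reg(PT(Y,σ)) denote the set of elements of the semigroup PT(Y,σ) = a⬝(PT_XY) = {a⬝k : k : X ⇀ Y} (under composition of partial self-maps of Y) that are regular in PT(Y,σ). Then the map ψ : Reg(PT_XY^a) → Reg(PT(X,B)) × Reg(PT(Y,σ)) given by ψ(f) = (f⬝a, a⬝f) is well defined and injective, and its image is exactly {(g, h) : g ∈ Reg(PT(X,B)), h ∈ Reg(PT(Y,σ)), a⬝g = h⬝a}. In particular, Reg(PT_XY^a) is a pullback product of Reg(PT(X,B)) and Reg(PT(Y,σ)). -/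

import Mathlib

/-- `f : X ⇀ Y` is a regular element of the sandwich semigroup `PT_XY^a`:
`f = f⬝a⬝g⬝a⬝f` for some `g : X ⇀ Y`. -/
def RegSand {X Y : Type*} (a : Y →. X) (f : X →. Y) : Prop :=
  ∃ g : X →. Y, f = f.comp (a.comp (g.comp (a.comp f)))

/-- `g` is a member of `Reg(PT(X,B))`: a partial self-map of `X` with image contained in
`B = ran a` which is regular within the semigroup `PT(X,B)` under composition. -/
def RegPTXB {X Y : Type*} (a : Y →. X) (g : X →. X) : Prop :=
  g.ran ⊆ a.ran ∧ ∃ k : X →. X, k.ran ⊆ a.ran ∧ g = g.comp (k.comp g)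

/-- `h` is a member of `Reg(PT(Y,σ))`: an element of `a⬝(PT_XY) = {a⬝k : k : X ⇀ Y}` which is
regular within that semigroup under composition.  (Here `a⬝k = k.comp a` applies `a` first.) -/
def RegPTYsigma {X Y : Type*} (a : Y →. X) (h : Y →. Y) : Prop :=
  (∃ k : X →. Y, h = k.comp a) ∧
    ∃ k' : Y →. Y, (∃ k : X →. Y, k' = k.comp a) ∧ h = h.comp (k'.comp h)

theorem mem_pcomp {α β γ : Type*} {f : β →. γ} {g : α →. β} {x : α} {z : γ} :
    z ∈ (f.comp g) x ↔ ∃ b ∈ g x, z ∈ f b := by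
  simp [PFun.comp_apply]
  exact Part.mem_bind_iff

theorem ran_pcomp_subset {α β γ : Type*} (f : β →. γ) (g : α →. β) :
    (f.comp g).ran ⊆ f.ran := by
  rintro z ⟨x, hz⟩
  obtain ⟨b, _, hb⟩ := mem_pcomp.1 hz
  exact ⟨b, hb⟩

theorem sand_part1 {X Y : Type*} (a : Y →. X) (f : X →. Y) (hf : RegSand a f) :
    RegPTXB a (a.comp f) ∧ RegPTYsigma a (f.comp a) := by
  obtain ⟨g, hg⟩ := hf
  refine ⟨⟨ran_pcomp_subset a f, a.comp g, ran_pcomp_subset a g, ?_⟩,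
    ⟨⟨f, rfl⟩, g.comp a, ⟨g, rfl⟩, ?_⟩⟩
  · conv_lhs => rw [hg]
    simp only [PFun.comp_assoc]
  · conv_lhs => rw [hg]
    simp only [PFun.comp_assoc]

theorem sand_part2 {X Y : Type*} (a : Y →. X) (f₁ f₂ : X →. Y)
    (h1 : RegSand a f₁) (h2 : RegSand a f₂)
    (e1 : a.comp f₁ = a.comp f₂) (e2 : f₁.comp a = f₂.comp a) : f₁ = f₂ := by
  obtain ⟨g₁, hg₁⟩ := h1
  obtain ⟨g₂, hg₂⟩ := h2
  calc f₁ = f₁.comp (a.comp (g₁.comp (a.comp f₁))) := hg₁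
    _ = f₁.comp (a.comp (g₁.comp (a.comp f₂))) := by rw [e1]
    _ = f₁.comp (a.comp (g₁.comp (a.comp (f₂.comp (a.comp (g₂.comp (a.comp f₂))))))) := by
        conv_lhs => rw [hg₂]
    _ = f₁.comp (a.comp (g₁.comp ((a.comp (f₂.comp a)).comp (g₂.comp (a.comp f₂))))) := by
        simp only [PFun.comp_assoc]
    _ = f₁.comp (a.comp (g₁.comp ((a.comp (f₁.comp a)).comp (g₂.comp (a.comp f₂))))) := by
        rw [← e2]
    _ = (f₁.comp (a.comp (g₁.comp (a.comp f₁)))).comp (a.comp (g₂.comp (a.comp f₂))) := by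
        simp only [PFun.comp_assoc]
    _ = f₁.comp (a.comp (g₂.comp (a.comp f₂))) := by rw [← hg₁]
    _ = (f₁.comp a).comp (g₂.comp (a.comp f₂)) := by simp only [PFun.comp_assoc]
    _ = (f₂.comp a).comp (g₂.comp (a.comp f₂)) := by rw [e2]
    _ = f₂ := by
        simp only [PFun.comp_assoc]
        rw [← hg₂]

theorem sand_part3 {X Y : Type*} (a : Y →. X) (g : X →. X) (h : Y →. Y)
    (hg : RegPTXB a g) (hh : RegPTYsigma a h) (hc : g.comp a = a.comp h) :
    ∃ f : X →. Y, RegSand a f ∧ a.comp f = g ∧ f.comp a = h := by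
  classical
  obtain ⟨hgran, k, hkran, hgk⟩ := hg
  obtain ⟨⟨k₀, hk₀⟩, k', ⟨k₁, rfl⟩, hhk⟩ := hh
  -- a choice of preimage under `a`, pinned by regularity of `h` where it matters
  have hFex : ∀ z, z ∈ a.ran → ∃ v : Y, z ∈ a v ∧
      ∀ t w, t ∈ k₁ z → w ∈ h t → z ∈ a w → v = w := by
    intro z hz
    by_cases hcz : ∃ t, t ∈ k₁ z ∧ ∃ w, w ∈ h t ∧ z ∈ a w
    · obtain ⟨t, ht, w, hw, hzw⟩ := hcz
      refine ⟨w, hzw, fun t' w' ht' hw' _ => ?_⟩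
      obtain rfl := Part.mem_unique ht ht'
      exact Part.mem_unique hw hw'
    · obtain ⟨v, hv⟩ := hz
      exact ⟨v, hv, fun t w ht hw hzw => absurd ⟨t, ht, w, hw, hzw⟩ hcz⟩
  choose F hF1 hF2 using hFex
  have Fcongr : ∀ z₁ z₂ (hz₁ : z₁ ∈ a.ran) (hz₂ : z₂ ∈ a.ran),
      z₁ = z₂ → F z₁ hz₁ = F z₂ hz₂ := by
    rintro z _ h₁ h₂ rfl; rfl
  set f : X →. Y :=
    fun x => ⟨(g x).Dom, fun hd => F ((g x).get hd) (hgran ⟨x, Part.get_mem hd⟩)⟩ with hfdef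
  have hmemf : ∀ x v, v ∈ f x ↔
      ∃ z, ∃ (hzg : z ∈ g x) (hz : z ∈ a.ran), v = F z hz := by
    intro x v
    rw [hfdef]
    simp only [Part.mem_mk_iff]
    constructor
    · rintro ⟨hd, rfl⟩
      exact ⟨(g x).get hd, Part.get_mem hd, hgran ⟨x, Part.get_mem hd⟩, rfl⟩
    · rintro ⟨z, hzg, hz, rfl⟩
      have hd : (g x).Dom := Part.dom_iff_mem.2 ⟨z, hzg⟩
      exact ⟨hd, Fcongr _ _ _ _ (Part.get_eq_of_mem hzg hd)⟩
  -- the key pinning property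
  have hFh : ∀ y x z, x ∈ a y → z ∈ g x → ∀ hz : z ∈ a.ran, F z hz ∈ h y := by
    intro y x z hy hzg hz
    have hz1 : z ∈ (g.comp a) y := mem_pcomp.2 ⟨x, hy, hzg⟩
    rw [hc] at hz1
    obtain ⟨w, hw, hzw⟩ := mem_pcomp.1 hz1
    have hw2 := hw
    rw [hhk] at hw2
    obtain ⟨b, hb, hwb⟩ := mem_pcomp.1 hw2
    obtain ⟨w₂, hw₂, hbk⟩ := mem_pcomp.1 hb
    rw [Part.mem_unique hw₂ hw] at hbk
    obtain ⟨z₂, hz₂, hbk₁⟩ := mem_pcomp.1 hbk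
    rw [Part.mem_unique hz₂ hzw] at hbk₁
    -- hbk₁ : b ∈ k₁ z, hwb : w ∈ h b
    rw [hF2 z hz b w hbk₁ hwb hzw]
    exact hw
  have hA : a.comp f = g := by
    apply PFun.ext; intro x z
    rw [mem_pcomp]
    constructor
    · rintro ⟨v, hvf, hzv⟩
      obtain ⟨z', hzg, hz', rfl⟩ := (hmemf x v).1 hvf
      obtain rfl := Part.mem_unique hzv (hF1 z' hz')
      exact hzg
    · intro hz
      have hza : z ∈ a.ran := hgran ⟨x, hz⟩
      exact ⟨F z hza, (hmemf x _).2 ⟨z, hz, hza, rfl⟩, hF1 z hza⟩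
  have hB : f.comp a = h := by
    apply PFun.ext; intro y v
    rw [mem_pcomp]
    constructor
    · rintro ⟨x, hxy, hvf⟩
      obtain ⟨z, hzg, hz, rfl⟩ := (hmemf x _).1 hvf
      exact hFh y x z hxy hzg hz
    · intro hv
      have hv' := hv
      rw [hk₀] at hv'
      obtain ⟨x, hxy, hvk⟩ := mem_pcomp.1 hv'
      -- v ∈ Dom a, via regularity of h
      have hv2 := hv
      rw [hhk] at hv2
      obtain ⟨b, hb, hvb⟩ := mem_pcomp.1 hv2
      obtain ⟨w₂, hw₂, hbk⟩ := mem_pcomp.1 hb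
      rw [Part.mem_unique hw₂ hv] at hbk
      obtain ⟨z₂, hz₂, hbk₁⟩ := mem_pcomp.1 hbk
      -- z₂ ∈ a v, so z₂ ∈ (a.comp h) y = (g.comp a) y, giving z₂ ∈ g x
      have hz₂' : z₂ ∈ (g.comp a) y := by
        rw [hc]; exact mem_pcomp.2 ⟨v, hv, hz₂⟩
      obtain ⟨x', hx'y, hz₂g⟩ := mem_pcomp.1 hz₂'
      obtain rfl := Part.mem_unique hx'y hxy
      have hz₂a : z₂ ∈ a.ran := hgran ⟨x', hz₂g⟩
      refine ⟨x', hxy, (hmemf x' v).2 ⟨z₂, hz₂g, hz₂a, ?_⟩⟩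
      exact Part.mem_unique hv (hFh y x' z₂ hxy hz₂g hz₂a)
  -- preimage selector for k
  have hKex : ∀ x' (hx' : (k x').Dom), ∃ u, (k x').get hx' ∈ a u :=
    fun x' hx' => hkran ⟨x', Part.get_mem hx'⟩
  choose K hK using hKex
  set khat : X →. Y := fun x' => ⟨(k x').Dom, fun p => K x' p⟩ with hkhatdef
  have hmemkhat : ∀ x' u, u ∈ khat x' ↔ ∃ p : (k x').Dom, K x' p = u := by
    intro x' u; rw [hkhatdef]; exact Part.mem_mk_iff
  refine ⟨f, ⟨khat, ?_⟩, hA, hB⟩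
  have hstep : f.comp (a.comp (khat.comp (a.comp f))) = (h.comp khat).comp g := by
    rw [hA, ← hB]; simp only [PFun.comp_assoc]
  rw [hstep]
  apply PFun.ext; intro x v
  simp only [mem_pcomp]
  constructor
  · intro hvf
    obtain ⟨z, hzg, hz, rfl⟩ := (hmemf x _).1 hvf
    -- from regularity of g: z ∈ g x₂ for some x₂ ∈ k z
    have hzg2 := hzg
    rw [hgk] at hzg2
    obtain ⟨x₂, hx₂, hzx₂⟩ := mem_pcomp.1 hzg2
    obtain ⟨z₂, hz₂g, hx₂k⟩ := mem_pcomp.1 hx₂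
    obtain rfl := Part.mem_unique hz₂g hzg
    -- x₂ ∈ k z₂(=z), z ∈ g x₂
    have p : (k z₂).Dom := Part.dom_iff_mem.2 ⟨x₂, hx₂k⟩
    have hgetx₂ : (k z₂).get p = x₂ := Part.get_eq_of_mem hx₂k p
    have hx₂a : x₂ ∈ a (K z₂ p) := by rw [← hgetx₂]; exact hK z₂ p
    refine ⟨z₂, hzg, K z₂ p, (hmemkhat z₂ _).2 ⟨p, rfl⟩, ?_⟩
    exact hFh (K z₂ p) x₂ z₂ hx₂a hzx₂ hz
  · rintro ⟨z, hzg, u, hu, hvh⟩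
    obtain ⟨p, rfl⟩ := (hmemkhat z u).1 hu
    -- x₂ := (k z).get p ∈ a (K z p)
    have hx₂a : (k z).get p ∈ a (K z p) := hK z p
    -- z ∈ g x₂ by regularity of g
    have hzg2 := hzg
    rw [hgk] at hzg2
    obtain ⟨x₂, hx₂, hzx₂⟩ := mem_pcomp.1 hzg2
    obtain ⟨z₂, hz₂g, hx₂k⟩ := mem_pcomp.1 hx₂
    obtain rfl := Part.mem_unique hz₂g hzg
    obtain rfl : x₂ = (k z₂).get p := Part.mem_unique hx₂k (Part.get_mem p)
    have hz : z₂ ∈ a.ran := hgran ⟨x, hzg⟩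
    have hFin : F z₂ hz ∈ h (K z₂ p) := hFh (K z₂ p) _ z₂ hx₂a hzx₂ hz
    obtain rfl := Part.mem_unique hvh hFin
    exact (hmemf x _).2 ⟨z₂, hzg, hz, rfl⟩

/-- The map `ψ : Reg(PT_XY^a) → Reg(PT(X,B)) × Reg(PT(Y,σ))`,
`ψ(f) = (f⬝a, a⬝f)`, is well defined and injective, and its image is exactly the set of pairs
`(g, h)` with `a⬝g = h⬝a`.  Hence `Reg(PT_XY^a)` is a pullback product of `Reg(PT(X,B))` and
`Reg(PT(Y,σ))`.  (Note `f⬝a = a.comp f`, `a⬝f = f.comp a`, `a⬝g = g.comp a`, `h⬝a = a.comp h`.) -/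
theorem pullback_product_RegPTXYa {X Y : Type*} (a : Y →. X) :
    (∀ f : X →. Y, RegSand a f → RegPTXB a (a.comp f) ∧ RegPTYsigma a (f.comp a)) ∧
    (∀ f₁ f₂ : X →. Y, RegSand a f₁ → RegSand a f₂ →
      a.comp f₁ = a.comp f₂ → f₁.comp a = f₂.comp a → f₁ = f₂) ∧
    (∀ (g : X →. X) (h : Y →. Y),
      (RegPTXB a g ∧ RegPTYsigma a h ∧ g.comp a = a.comp h) ↔
        ∃ f : X →. Y, RegSand a f ∧ a.comp f = g ∧ f.comp a = h) := by
  refine ⟨fun f hf => sand_part1 a f hf,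
    fun f₁ f₂ h1 h2 e1 e2 => sand_part2 a f₁ f₂ h1 h2 e1 e2,
    fun g h => ⟨fun ⟨hg, hh, hc⟩ => sand_part3 a g h hg hh hc, ?_⟩⟩
  rintro ⟨f, hf, rfl, rfl⟩
  exact ⟨(sand_part1 a f hf).1, (sand_part1 a f hf).2, PFun.comp_assoc a f a⟩
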